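/- For every integer n ≥ 0: ∑_{j=0}^{∞} q^{j^2} [2n - j choose j]_q = ∑_{j=-∞}^{∞} (-1)^j q^{j(5j+1)/2} [2n choose ⌊n - 5j/2⌋]_q. -/

import Mathlib

open Finset

noncomputable section

abbrev F := RatFunc ℚ

/-- The variable `q`, a transcendental element. -/
def q : F := RatFunc.X

/-- `(b;b)_n = ∏_{i=1}^n (1 - b^i)` -/
def pq (b : F) (n : ℕ) : F := ∏ i ∈ Finset.range n, (1 - b ^ (i + 1))

/-- Gaussian binomial coefficient in base `b`, zero when `k < 0` or `k > a`. -/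
def qbin (b : F) (a k : ℤ) : F :=
  if 0 ≤ k ∧ k ≤ a then pq b a.toNat / (pq b k.toNat * pq b (a - k).toNat) else 0

/-- Primed Gaussian binomial: equals 1 when `a < 0` and `k = 0`. -/
def qbin' (b : F) (a k : ℤ) : F :=
  if a < 0 ∧ k = 0 then 1 else qbin b a k

lemma q_ne_zero : q ≠ 0 := RatFunc.X_ne_zero

lemma one_sub_q_pow_ne_zero (i : ℕ) : (1 : F) - q ^ (i + 1) ≠ 0 := by
  intro h
  have h2 : (q : F) ^ (i+1) = 1 := by linear_combination -h
  have : (RatFunc.X : F) ^ (i+1) = algebraMap (Polynomial ℚ) F (Polynomial.X ^ (i+1)) := by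
    simp [RatFunc.algebraMap_X]
  rw [q] at h2
  rw [this] at h2
  have h3 : (Polynomial.X ^ (i+1) : Polynomial ℚ) = 1 := by
    apply RatFunc.algebraMap_injective ℚ
    rw [h2, map_one]
  have := congrArg (Polynomial.natDegree) h3
  simp [Polynomial.natDegree_X_pow] at this

lemma pq_ne_zero (n : ℕ) : pq q n ≠ 0 := by
  rw [pq]
  exact Finset.prod_ne_zero_iff.2 fun i _ => one_sub_q_pow_ne_zero i

lemma pq_succ (n : ℕ) : pq q (n + 1) = pq q n * (1 - q ^ (n + 1)) := by
  rw [pq, pq, Finset.prod_range_succ]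

lemma qbin_eq_zero {a k : ℤ} (h : ¬(0 ≤ k ∧ k ≤ a)) : qbin q a k = 0 := by
  rw [qbin, if_neg h]

lemma qbin_eq_zero_of_neg {a k : ℤ} (h : k < 0) : qbin q a k = 0 :=
  qbin_eq_zero (by omega)

lemma qbin_eq_zero_of_gt {a k : ℤ} (h : a < k) : qbin q a k = 0 :=
  qbin_eq_zero (by omega)

/-- the "B" form on naturals -/
lemma qbin_natCast (a k : ℕ) (h : k ≤ a) :
    qbin q (a : ℤ) (k : ℤ) = pq q a / (pq q k * pq q (a - k)) := by
  rw [qbin, if_pos ⟨Int.ofNat_nonneg k, by exact_mod_cast h⟩]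
  have h1 : ((a : ℤ) - k).toNat = a - k := by omega
  simp [h1]

lemma qbin_zero {a : ℤ} (h : 0 ≤ a) : qbin q a 0 = 1 := by
  rw [qbin, if_pos ⟨le_refl 0, h⟩]
  simp [pq]
  exact pq_ne_zero _

lemma qbin_self {a : ℤ} (h : 0 ≤ a) : qbin q a a = 1 := by
  rw [qbin, if_pos ⟨h, le_refl a⟩]
  simp [pq]
  exact pq_ne_zero _

lemma qbin_symm (a k : ℤ) (h : 0 ≤ a) : qbin q a k = qbin q a (a - k) := by
  rcases le_or_gt 0 k with hk | hk
  · rcases le_or_gt k a with hka | hka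
    · rw [qbin, if_pos ⟨hk, hka⟩, qbin, if_pos ⟨by omega, by omega⟩]
      have : a - (a - k) = k := by ring
      rw [this, mul_comm]
    · rw [qbin_eq_zero_of_gt hka, qbin_eq_zero_of_neg (by omega)]
  · rw [qbin_eq_zero_of_neg hk, qbin_eq_zero_of_gt (by omega)]

/-- core algebraic Pascal for interior parameters -/
lemma pascal_core (i j : ℕ) :
    qbin q ((i : ℤ) + j + 2) ((i : ℤ) + 1) =
      qbin q ((i : ℤ) + j + 1) i + q ^ ((i : ℤ) + 1) * qbin q ((i : ℤ) + j + 1) ((i : ℤ) + 1) := by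
  have e1 : ((i : ℤ) + j + 2) = ((i + j + 2 : ℕ) : ℤ) := by push_cast; ring
  have e2 : ((i : ℤ) + 1) = ((i + 1 : ℕ) : ℤ) := by push_cast; ring
  have e3 : ((i : ℤ) + j + 1) = ((i + j + 1 : ℕ) : ℤ) := by push_cast; ring
  rw [e1, e2, e3, qbin_natCast _ _ (by omega), qbin_natCast _ _ (by omega),
    qbin_natCast _ _ (by omega)]
  have d1 : i + j + 2 - (i + 1) = j + 1 := by omega
  have d2 : i + j + 1 - i = j + 1 := by omega
  have d3 : i + j + 1 - (i + 1) = j := by omega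
  rw [d1, d2, d3]
  rw [zpow_natCast, pq_succ (i + j + 1), pq_succ i, pq_succ j]
  have hi := pq_ne_zero i
  have hj := pq_ne_zero j
  have hi1 := one_sub_q_pow_ne_zero i
  have hj1 := one_sub_q_pow_ne_zero j
  field_simp
  ring

lemma pascal1 (a k : ℤ) (ha : 1 ≤ a) :
    qbin q a k = qbin q (a - 1) (k - 1) + q ^ k * qbin q (a - 1) k := by
  rcases lt_trichotomy k 0 with hk | hk | hk
  · rw [qbin_eq_zero_of_neg hk, qbin_eq_zero_of_neg hk, qbin_eq_zero_of_neg (by omega)]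
    ring
  · subst hk
    rw [qbin_zero (by omega), qbin_zero (by omega), qbin_eq_zero_of_neg (by omega)]
    norm_num
  · rcases lt_trichotomy a k with hak | hak | hak
    · rw [qbin_eq_zero_of_gt hak, qbin_eq_zero_of_gt (by omega), qbin_eq_zero_of_gt (by omega)]
      ring
    · subst hak
      rw [qbin_self (by omega), qbin_self (by omega), qbin_eq_zero_of_gt (by omega)]
      ring
    · -- 1 ≤ k ≤ a - 1
      have hk1 : 1 ≤ k := hk
      obtain ⟨i, hi⟩ : ∃ i : ℕ, k = (i : ℤ) + 1 := ⟨(k - 1).toNat, by omega⟩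
      obtain ⟨j, hj⟩ : ∃ j : ℕ, a = (i : ℤ) + j + 2 := ⟨(a - k - 1).toNat, by omega⟩
      subst hi hj
      have h1 : (i : ℤ) + j + 2 - 1 = (i : ℤ) + j + 1 := by ring
      have h2 : (i : ℤ) + 1 - 1 = (i : ℤ) := by ring
      rw [h1, h2]
      exact pascal_core i j

lemma pascal2 (a k : ℤ) (ha : 1 ≤ a) :
    qbin q a k = q ^ (a - k) * qbin q (a - 1) (k - 1) + qbin q (a - 1) k := by
  rw [qbin_symm a k (by omega), pascal1 a (a - k) ha]
  have h1 : a - k - 1 = (a - 1) - k := by ring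
  rw [h1, ← qbin_symm (a-1) k (by omega)]
  have h2 : a - k = (a - 1) - (k - 1) := by ring
  rw [h2, ← qbin_symm (a-1) (k-1) (by omega)]
  ring

/-! ### fdiv facts -/

lemma fdiv_two (t : ℤ) : t = 2 * t.fdiv 2 ∨ t = 2 * t.fdiv 2 + 1 := by
  have h1 := Int.mul_fdiv_add_fmod t 2
  have h2 : 0 ≤ t.fmod 2 := Int.fmod_nonneg_of_pos t (by norm_num)
  have h3 : t.fmod 2 < 2 := Int.fmod_lt_of_pos t (by norm_num)
  omega

lemma even_js (j : ℤ) : Even (j * (5 * j + 1)) := by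
  rcases Int.even_or_odd j with ⟨t, ht⟩ | ⟨t, ht⟩
  · exact ⟨t * (5 * j + 1), by subst ht; ring⟩
  · exact ⟨j * (5 * t + 3), by subst ht; ring⟩

lemma two_mul_E (j : ℤ) : 2 * (j * (5 * j + 1) / 2) = j * (5 * j + 1) :=
  Int.two_mul_ediv_two_of_even (even_js j)

/-! ### the two sums -/

def Lterm (m j : ℕ) : F := q ^ (j ^ 2) * qbin q ((m : ℤ) - j) (j : ℤ)

def Lsum (m : ℕ) : F := ∑ j ∈ Finset.range (m + 1), Lterm m j

def Rterm (m j : ℤ) : F :=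
  (-1 : F) ^ j * q ^ (j * (5 * j + 1) / 2) * qbin q m ((m - 5 * j).fdiv 2)

def Rsum (m : ℤ) : F := ∑ j ∈ Finset.Icc (-m - 1) (m + 1), Rterm m j

lemma Lterm_eq_zero (m j : ℕ) (h : m < 2 * j) : Lterm m j = 0 := by
  rw [Lterm, qbin_eq_zero (by push_cast; omega), mul_zero]

lemma Rterm_eq_zero {m j : ℤ} (hm : 0 ≤ m) (h : j < -m - 1 ∨ m + 1 < j) : Rterm m j = 0 := by
  have h2 := fdiv_two (m - 5 * j)
  rw [Rterm, qbin_eq_zero (by omega), mul_zero]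

lemma Lsum_eq_range (m N : ℕ) (h : m + 1 ≤ 2 * N) :
    ∑ j ∈ Finset.range N, Lterm m j = Lsum m := by
  rcases le_total N (m + 1) with hN | hN
  · exact Finset.sum_subset (Finset.range_subset_range.2 hN)
      (fun x hx hx' => Lterm_eq_zero m x (by simp at hx hx'; omega))
  · exact (Finset.sum_subset (Finset.range_subset_range.2 hN)
      (fun x hx hx' => Lterm_eq_zero m x (by simp at hx hx'; omega))).symm

lemma Rsum_eq_Icc (m A B : ℤ) (hm : 0 ≤ m) (hA : A ≤ -m - 1) (hB : m + 1 ≤ B) :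
    ∑ j ∈ Finset.Icc A B, Rterm m j = Rsum m := by
  refine (Finset.sum_subset (Finset.Icc_subset_Icc hA hB)
    (fun x hx hx' => Rterm_eq_zero hm ?_)).symm
  simp only [Finset.mem_Icc] at hx hx'
  omega

def Extra (m j : ℤ) : F :=
  (-1 : F) ^ j * (q ^ (j * (5 * j + 1) / 2) * q ^ ((m - 5 * j).fdiv 2)) *
    qbin q (m - 2) ((m - 5 * j).fdiv 2)

lemma Rterm_rec (m j : ℤ) (hm : 2 ≤ m) :
    Rterm m j - Rterm (m - 1) j - q ^ (m - 1) * Rterm (m - 2) j =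
      if Even (m - 5 * j) then Extra m j else -Extra m (j + 1) := by
  set k := (m - 5 * j).fdiv 2 with hk
  have hfd0 := fdiv_two (m - 5 * j)
  have hfd1 := fdiv_two (m - 1 - 5 * j)
  have hfd2 := fdiv_two (m - 2 - 5 * j)
  rcases hfd0 with heven | hodd
  · -- even case : m - 5j = 2k
    rw [if_pos ⟨k, by omega⟩]
    have e1 : (m - 1 - 5 * j).fdiv 2 = k - 1 := by omega
    have e2 : (m - 2 - 5 * j).fdiv 2 = k - 1 := by omega
    rw [Rterm, Rterm, Rterm, Extra, e1, e2, ← hk]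
    rw [pascal1 m k (by omega), pascal2 (m - 1) k (by omega)]
    rw [show m - 1 - 1 = m - 2 from by ring]
    have h1 : (q : F) ^ k * q ^ (m - 1 - k) = q ^ (m - 1) := by
      rw [← zpow_add₀ q_ne_zero]; congr 1; ring
    linear_combination ((-1 : F) ^ j * q ^ (j * (5 * j + 1) / 2) * qbin q (m - 2) (k - 1)) * h1
  · -- odd case : m - 5j = 2k + 1
    rw [if_neg (by rintro ⟨t, ht⟩; omega)]
    have e1 : (m - 1 - 5 * j).fdiv 2 = k := by omega
    have e2 : (m - 2 - 5 * j).fdiv 2 = k - 1 := by omega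
    have e4 : (m - 5 * (j + 1)).fdiv 2 = k - 2 := by
      have := fdiv_two (m - 5 * (j + 1)); omega
    rw [Rterm, Rterm, Rterm, Extra, e1, e2, e4, ← hk]
    rw [pascal2 m k (by omega), pascal1 (m - 1) (k - 1) (by omega)]
    rw [show m - 1 - 1 = m - 2 from by ring, show k - 1 - 1 = k - 2 from by ring]
    have hEE : (j + 1) * (5 * (j + 1) + 1) / 2 = j * (5 * j + 1) / 2 + (5 * j + 3) := by
      have h1 := two_mul_E j
      have h2 := two_mul_E (j + 1)
      have h3 : (j + 1) * (5 * (j + 1) + 1) = j * (5 * j + 1) + 10 * j + 6 := by ring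
      omega
    rw [hEE, zpow_add₀ q_ne_zero,
      show ((j : ℤ) + 1) = j + 1 from rfl,
      zpow_add₀ (by norm_num : (-1 : F) ≠ 0) j 1, zpow_one]
    have h1 : (q : F) ^ (m - k) * q ^ (k - 1) = q ^ (m - 1) := by
      rw [← zpow_add₀ q_ne_zero]; congr 1; ring
    have h2 : (q : F) ^ (5 * j + 3) * q ^ (k - 2) = q ^ (m - k) := by
      rw [← zpow_add₀ q_ne_zero]; congr 1; omega
    linear_combination ((-1 : F) ^ j * q ^ (j * (5 * j + 1) / 2) * qbin q (m - 2) (k - 1)) * h1 -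
      ((-1 : F) ^ j * q ^ (j * (5 * j + 1) / 2) * qbin q (m - 2) (k - 2)) * h2

lemma Extra_eq_zero {m j : ℤ} (hm : 2 ≤ m) (h : j ≤ -m - 1 ∨ m + 2 ≤ j) : Extra m j = 0 := by
  have h2 := fdiv_two (m - 5 * j)
  rw [Extra, qbin_eq_zero (by omega), mul_zero]

lemma Rsum_rec (m : ℤ) (hm : 2 ≤ m) :
    Rsum m = Rsum (m - 1) + q ^ (m - 1) * Rsum (m - 2) := by
  set S : Finset ℤ := Finset.Icc (-m - 1) (m + 1) with hS
  have h1 : Rsum (m - 1) = ∑ j ∈ S, Rterm (m - 1) j :=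
    (Rsum_eq_Icc (m - 1) _ _ (by omega) (by omega) (by omega)).symm
  have h2 : Rsum (m - 2) = ∑ j ∈ S, Rterm (m - 2) j :=
    (Rsum_eq_Icc (m - 2) _ _ (by omega) (by omega) (by omega)).symm
  have h0 : Rsum m = ∑ j ∈ S, Rterm m j := rfl
  have hterm : ∀ j ∈ S, Rterm m j - Rterm (m - 1) j - q ^ (m - 1) * Rterm (m - 2) j =
      if Even (m - 5 * j) then Extra m j else -Extra m (j + 1) :=
    fun j _ => Rterm_rec m j hm
  have key : (∑ j ∈ S.filter (fun j => Even (m - 5 * j)), Extra m j) =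
      ∑ j ∈ S.filter (fun j => ¬ Even (m - 5 * j)), Extra m (j + 1) := by
    set T : Finset ℤ := (Finset.Icc (-m - 1) (m + 2)).filter (fun j => Even (m - 5 * j)) with hT
    have e1 : (∑ j ∈ S.filter (fun j => Even (m - 5 * j)), Extra m j) = ∑ j ∈ T, Extra m j := by
      refine Finset.sum_subset (Finset.filter_subset_filter _ ?_) ?_
      · exact Finset.Icc_subset_Icc (le_refl _) (by omega)
      · intro x hx hx'
        simp only [hT, hS, Finset.mem_filter, Finset.mem_Icc] at hx hx'
        refine Extra_eq_zero hm (Or.inr ?_)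
        by_contra hcon
        push_neg at hcon
        exact hx' ⟨⟨hx.1.1, by omega⟩, hx.2⟩
    have e2 : (∑ j ∈ S.filter (fun j => ¬ Even (m - 5 * j)), Extra m (j + 1)) =
        ∑ j ∈ T, Extra m j := by
      have e3 : (∑ j ∈ S.filter (fun j => ¬ Even (m - 5 * j)), Extra m (j + 1)) =
          ∑ j ∈ (Finset.Icc (-m) (m + 2)).filter (fun j => Even (m - 5 * j)), Extra m j := by
        refine Finset.sum_nbij' (fun j => j + 1) (fun j => j - 1) ?_ ?_ ?_ ?_ ?_
        · intro a ha
          simp only [hS, Finset.mem_filter, Finset.mem_Icc] at ha ⊢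
          constructor
          · omega
          · rcases Int.even_or_odd (m - 5 * a) with he | ho
            · exact absurd he ha.2
            · obtain ⟨t, ht⟩ := ho; exact ⟨t - 2, by omega⟩
        · intro a ha
          simp only [hS, Finset.mem_filter, Finset.mem_Icc] at ha ⊢
          obtain ⟨t, ht⟩ := ha.2
          refine ⟨by omega, fun he => ?_⟩
          obtain ⟨u, hu⟩ := he; omega
        · intro a _; ring
        · intro a _; ring
        · intro a _; rfl
      rw [e3]
      refine Finset.sum_subset (Finset.filter_subset_filter _ ?_) ?_
      · exact Finset.Icc_subset_Icc (by omega) (le_refl _)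
      · intro x hx hx'
        simp only [hT, Finset.mem_filter, Finset.mem_Icc] at hx hx'
        refine Extra_eq_zero hm (Or.inl ?_)
        by_contra hcon
        push_neg at hcon
        exact hx' ⟨⟨by omega, hx.1.2⟩, hx.2⟩
    rw [e1, e2]
  have main : (∑ j ∈ S, (Rterm m j - Rterm (m - 1) j - q ^ (m - 1) * Rterm (m - 2) j)) = 0 := by
    rw [Finset.sum_congr rfl hterm, Finset.sum_ite, Finset.sum_neg_distrib, key]
    ring
  rw [Finset.sum_sub_distrib, Finset.sum_sub_distrib] at main
  rw [h0, h1, h2, Finset.mul_sum]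
  linear_combination main

lemma Lsum_rec (M : ℕ) :
    Lsum (M + 2) = Lsum (M + 1) + q ^ ((M : ℤ) + 1) * Lsum M := by
  have hL : Lsum (M + 2) = ∑ j ∈ Finset.range (M + 2), Lterm (M + 2) j :=
    (Lsum_eq_range (M + 2) (M + 2) (by omega)).symm
  set G : ℕ → F := fun j =>
    q ^ (j ^ 2) * (q ^ ((M : ℤ) + 2 - 2 * j) * qbin q ((M : ℤ) + 1 - j) ((j : ℤ) - 1)) with hG
  have hterm : ∀ j ∈ Finset.range (M + 2), Lterm (M + 2) j = Lterm (M + 1) j + G j := by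
    intro j hj
    simp only [Finset.mem_range] at hj
    simp only [Lterm, hG]
    have c1 : ((M + 2 : ℕ) : ℤ) - j = (M : ℤ) + 2 - j := by push_cast; ring
    have c2 : ((M + 1 : ℕ) : ℤ) - j = (M : ℤ) + 1 - j := by push_cast; ring
    rw [c1, c2, pascal2 ((M : ℤ) + 2 - j) j (by omega),
      show (M : ℤ) + 2 - j - 1 = (M : ℤ) + 1 - j from by ring,
      show (M : ℤ) + 2 - j - (j : ℤ) = (M : ℤ) + 2 - 2 * j from by ring]
    ring
  rw [hL, Finset.sum_congr rfl hterm, Finset.sum_add_distrib,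
    Lsum_eq_range (M + 1) (M + 2) (by omega)]
  congr 1
  rw [Finset.sum_range_succ']
  have hG0 : G 0 = 0 := by
    simp only [hG]
    rw [qbin_eq_zero_of_neg (by norm_num)]
    simp
  rw [hG0, add_zero]
  have hGs : ∀ i, G (i + 1) = q ^ ((M : ℤ) + 1) * Lterm M i := by
    intro i
    simp only [hG, Lterm]
    have c1 : (M : ℤ) + 1 - ((i + 1 : ℕ) : ℤ) = (M : ℤ) - i := by push_cast; ring
    have c2 : ((i + 1 : ℕ) : ℤ) - 1 = (i : ℤ) := by push_cast; ring
    rw [c1, c2]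
    rw [← zpow_natCast q ((i + 1) ^ 2), ← zpow_natCast q (i ^ 2),
      ← mul_assoc, ← zpow_add₀ q_ne_zero, ← mul_assoc, ← zpow_add₀ q_ne_zero]
    have : (((i + 1) ^ 2 : ℕ) : ℤ) + ((M : ℤ) + 2 - 2 * ((i + 1 : ℕ) : ℤ)) =
        ((M : ℤ) + 1) + ((i ^ 2 : ℕ) : ℤ) := by push_cast; ring
    rw [this]
  rw [Finset.sum_congr rfl (fun i _ => hGs i), ← Finset.mul_sum,
    Lsum_eq_range M (M + 1) (by omega)]

lemma Lsum_zero : Lsum 0 = 1 := by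
  rw [Lsum]
  simp [Lterm, qbin_zero]

lemma Lsum_one : Lsum 1 = 1 := by
  rw [Lsum]
  rw [Finset.sum_range_succ, Finset.sum_range_one]
  rw [Lterm, Lterm]
  norm_num
  rw [qbin_zero (by norm_num), qbin_eq_zero_of_gt (by norm_num)]
  simp

lemma Rsum_zero : Rsum 0 = 1 := by
  rw [Rsum]
  norm_num
  have : Finset.Icc (-1 : ℤ) 1 = {-1, 0, 1} := by decide
  rw [this]
  rw [Finset.sum_insert (by decide), Finset.sum_insert (by decide), Finset.sum_singleton]
  rw [Rterm, Rterm, Rterm]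
  norm_num
  rw [show Int.fdiv 5 2 = 2 from by decide,
    show ((-5 : ℤ)).fdiv 2 = -3 from by decide]
  rw [qbin_eq_zero_of_gt (by norm_num), qbin_zero (by norm_num),
    qbin_eq_zero_of_neg (by norm_num)]
  simp

lemma Rsum_one : Rsum 1 = 1 := by
  rw [Rsum]
  norm_num
  have : Finset.Icc (-2 : ℤ) 2 = {-2, -1, 0, 1, 2} := by decide
  rw [this]
  rw [Finset.sum_insert (by decide), Finset.sum_insert (by decide),
    Finset.sum_insert (by decide), Finset.sum_insert (by decide), Finset.sum_singleton]
  rw [Rterm, Rterm, Rterm, Rterm, Rterm]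
  norm_num
  rw [show Int.fdiv 11 2 = 5 from by decide,
    show Int.fdiv 6 2 = 3 from by decide,
    show Int.fdiv 1 2 = 0 from by decide,
    show ((-4 : ℤ)).fdiv 2 = -2 from by decide,
    show ((-9 : ℤ)).fdiv 2 = -5 from by decide]
  rw [qbin_eq_zero_of_gt (by norm_num), qbin_eq_zero_of_gt (by norm_num),
    qbin_zero (by norm_num), qbin_eq_zero_of_neg (by norm_num),
    qbin_eq_zero_of_neg (by norm_num)]
  simp

lemma main_eq (m : ℕ) : Lsum m = Rsum (m : ℤ) := by
  induction m using Nat.strong_induction_on with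
  | _ m ih =>
    match m with
    | 0 => rw [Lsum_zero]; exact Rsum_zero.symm
    | 1 => rw [Lsum_one]; exact_mod_cast Rsum_one.symm
    | (M + 2) =>
      have hR := Rsum_rec ((M : ℤ) + 2) (by omega)
      rw [show (M : ℤ) + 2 - 1 = ((M + 1 : ℕ) : ℤ) from by push_cast; ring,
        show (M : ℤ) + 2 - 2 = ((M : ℕ) : ℤ) from by push_cast; ring] at hR
      rw [Lsum_rec M, ih (M + 1) (by omega), ih M (by omega),
        show ((M + 2 : ℕ) : ℤ) = (M : ℤ) + 2 from by push_cast; ring, hR]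
      norm_num

theorem stmt8 (n : ℕ) :
    (∑ᶠ j : ℕ, q ^ (j ^ 2) * qbin q (2 * (n : ℤ) - j) (j : ℤ)) =
      ∑ᶠ j : ℤ, (-1 : F) ^ j * q ^ (j * (5 * j + 1) / 2) *
        qbin q (2 * (n : ℤ)) ((2 * (n : ℤ) - 5 * j).fdiv 2) := by
  have hc : (2 * (n : ℤ)) = ((2 * n : ℕ) : ℤ) := by push_cast; ring
  have hLf : ∀ j : ℕ, q ^ (j ^ 2) * qbin q (2 * (n : ℤ) - j) (j : ℤ) = Lterm (2 * n) j := by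
    intro j; rw [Lterm, hc]
  have hRf : ∀ j : ℤ, (-1 : F) ^ j * q ^ (j * (5 * j + 1) / 2) *
      qbin q (2 * (n : ℤ)) ((2 * (n : ℤ) - 5 * j).fdiv 2) = Rterm (2 * (n : ℤ)) j := by
    intro j; rw [Rterm]
  calc (∑ᶠ j : ℕ, q ^ (j ^ 2) * qbin q (2 * (n : ℤ) - j) (j : ℤ))
      = ∑ᶠ j : ℕ, Lterm (2 * n) j := by simp only [hLf]
    _ = ∑ j ∈ Finset.range (2 * n + 1), Lterm (2 * n) j := by
        apply finsum_eq_sum_of_support_subset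
        intro j hj
        simp only [Function.mem_support] at hj
        simp only [Finset.coe_range, Set.mem_Iio]
        by_contra hcon
        exact hj (Lterm_eq_zero _ _ (by omega))
    _ = Lsum (2 * n) := rfl
    _ = Rsum ((2 * n : ℕ) : ℤ) := main_eq (2 * n)
    _ = ∑ j ∈ Finset.Icc (-(2 * (n : ℤ)) - 1) (2 * (n : ℤ) + 1), Rterm (2 * (n : ℤ)) j := by
        rw [Rsum, ← hc]
    _ = ∑ᶠ j : ℤ, Rterm (2 * (n : ℤ)) j := by
        refine (finsum_eq_sum_of_support_subset _ ?_).symm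
        intro j hj
        simp only [Function.mem_support] at hj
        simp only [Finset.coe_Icc, Set.mem_Icc]
        by_contra hcon
        push_neg at hcon
        rcases le_or_gt (-(2 * (n : ℤ)) - 1) j with h | h
        · exact hj (Rterm_eq_zero (by positivity) (Or.inr (by omega)))
        · exact hj (Rterm_eq_zero (by positivity) (Or.inl (by omega)))
    _ = ∑ᶠ j : ℤ, (-1 : F) ^ j * q ^ (j * (5 * j + 1) / 2) *
        qbin q (2 * (n : ℤ)) ((2 * (n : ℤ) - 5 * j).fdiv 2) := by simp only [hRf]
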